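/- arXiv:2111.09933 — 4 statements merged into one kernel-verified Lean document; each statement's English description precedes it below -/
import Mathlib

section
/- The pricing transformation matrix T has full column rank m+1 whenever all historical price probabilities π(i) are strictly positive. Consequently T admits a left inverse R with RT = I. -/
open Matrix

/-- The pricing transformation matrix `T` (2m × (m+1)), 0-indexed. -/
def Tmat (m : ℕ) (π : Fin m → ℝ) : Matrix (Fin (2 * m)) (Fin (m + 1)) ℝ :=
  fun i j =>
    if h : i.val < m then (if i.val < j.val then π ⟨i.val, h⟩ else 0)
    else (if j.val + m ≤ i.val then π ⟨i.val - m, by have := i.isLt; omega⟩ else 0)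

lemma key_zero (m : ℕ) (hm : 1 ≤ m) (π : Fin m → ℝ) (hπpos : ∀ i, 0 < π i)
    (g : Fin (m + 1) → ℝ) (h : ∀ i, ∑ j, g j * Tmat m π i j = 0) :
    ∀ j, g j = 0 := by
  -- first, all g j with j.val < m are zero, by strong induction
  have key : ∀ k, ∀ hk : k < m, g ⟨k, by omega⟩ = 0 := by
    intro k
    induction k using Nat.strong_induction_on with
    | _ k ih =>
      intro hk
      have hrow := h ⟨k + m, by omega⟩
      have hsum : ∑ j, g j * Tmat m π ⟨k + m, by omega⟩ j
          = g ⟨k, by omega⟩ * π ⟨k, hk⟩ := by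
        rw [Finset.sum_eq_single_of_mem (⟨k, by omega⟩ : Fin (m + 1)) (Finset.mem_univ _)]
        · have h1 : Tmat m π ⟨k + m, by omega⟩ ⟨k, by omega⟩ = π ⟨k, hk⟩ := by
            simp [Tmat]
          rw [h1]
        · intro j _ hj
          rcases lt_or_gt_of_ne (fun hv : j.val = k => hj (Fin.ext hv)) with hlt | hgt
          · have hgj : g j = 0 := by
              have := ih j.val (by omega) (by omega)
              convert this using 2
            simp [hgj]
          · have h0 : Tmat m π ⟨k + m, by omega⟩ j = 0 := by
              simp only [Tmat]
              rw [dif_neg (by omega), if_neg (by omega)]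
            simp [h0]
      rw [hsum] at hrow
      rcases mul_eq_zero.mp hrow with h' | h'
      · exact h'
      · exact absurd h' (hπpos _).ne'
  intro j
  rcases lt_or_ge j.val m with hj | hj
  · have := key j.val hj
    convert this using 2
  · -- j = last, use top row m-1
    have hjm : j.val = m := by omega
    have hrow := h ⟨m - 1, by omega⟩
    have hsum : ∑ i, g i * Tmat m π ⟨m - 1, by omega⟩ i
        = g j * π ⟨m - 1, by omega⟩ := by
      rw [Finset.sum_eq_single_of_mem j (Finset.mem_univ _)]
      · have h1 : Tmat m π ⟨m - 1, by omega⟩ j = π ⟨m - 1, by omega⟩ := by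
          simp only [Tmat]
          rw [dif_pos (by omega), if_pos (by omega)]
        rw [h1]
      · intro i _ hi
        have hiv : i.val < m := by
          rcases lt_or_ge i.val m with h' | h'
          · exact h'
          · exact absurd (Fin.ext (by omega) : i = j) hi
        have h0 : Tmat m π ⟨m - 1, by omega⟩ i = 0 := by
          simp only [Tmat]
          rw [dif_pos (by omega), if_neg (by omega)]
        simp [h0]
    rw [hsum] at hrow
    rcases mul_eq_zero.mp hrow with h' | h'
    · exact h'
    · exact absurd h' (hπpos _).ne'

/-- If all historical price probabilities are strictly positive, `T` has
linearly independent columns, full rank `m+1`, and admits a left inverse. -/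
theorem stmt_2 (m : ℕ) (hm : 1 ≤ m) (π : Fin m → ℝ) (hπpos : ∀ i, 0 < π i) :
    LinearIndependent ℝ (fun j : Fin (m + 1) => (Tmat m π)ᵀ j) ∧
    (Tmat m π).rank = m + 1 ∧
    ∃ R : Matrix (Fin (m + 1)) (Fin (2 * m)) ℝ, R * Tmat m π = 1 := by
  have hli : LinearIndependent ℝ (fun j : Fin (m + 1) => (Tmat m π)ᵀ j) := by
    rw [Fintype.linearIndependent_iff]
    intro g hg
    apply key_zero m hm π hπpos g
    intro i
    have := congrFun hg i
    simpa [Matrix.transpose_apply, mul_comm] using this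
  refine ⟨hli, ?_, ?_⟩
  · rw [Matrix.rank_eq_finrank_span_cols]
    rw [finrank_span_eq_card (b := (Tmat m π).col) hli]
    simp
  · have hker : LinearMap.ker (Matrix.mulVecLin (Tmat m π)) = ⊥ := by
      rw [LinearMap.ker_eq_bot']
      intro g hg
      funext j
      apply key_zero m hm π hπpos g
      intro i
      have := congrFun hg i
      simpa [Matrix.mulVecLin_apply, Matrix.mulVec, dotProduct, mul_comm] using this
    obtain ⟨f, hf⟩ := LinearMap.exists_leftInverse_of_injective _ hker
    refine ⟨LinearMap.toMatrix' f, ?_⟩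
    have h2 : LinearMap.toMatrix' (Matrix.mulVecLin (Tmat m π)) = Tmat m π := by
      rw [← Matrix.toLin'_apply']
      exact LinearMap.toMatrix'_toLin' _
    have h3 : LinearMap.toMatrix' (f.comp (Matrix.mulVecLin (Tmat m π))) =
        LinearMap.toMatrix' f * LinearMap.toMatrix' (Matrix.mulVecLin (Tmat m π)) :=
      LinearMap.toMatrix'_comp _ _
    rw [hf, h2] at h3
    simpa using h3.symm
end

section
/- Among all left inverses R of a full-column-rank matrix T (with RT = I), the quadratic form lᵀ R D Rᵀ l, for a fixed vector l and fixed positive-definite diagonal matrix D, is minimized by R_MV where R_MVᵀ = (Tᵀ D⁻¹ T)⁻¹ Tᵀ D⁻¹; that is, for any R with RT = I, lᵀ R_MV D R_MVᵀ l ≤ lᵀ R D Rᵀ l. -/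
open Matrix

/-- Among all left inverses `R` of `T`, the quadratic form `lᵀ R D Rᵀ l` is
minimized by `R_MV` with `R_MVᵀ = (Tᵀ D⁻¹ T)⁻¹ Tᵀ D⁻¹` (Lemma 3). -/
theorem stmt_5 (n k : ℕ) (T : Matrix (Fin n) (Fin k) ℝ)
    (hT : LinearIndependent ℝ (fun j : Fin k => Tᵀ j))
    (d : Fin n → ℝ) (hd : ∀ i, 0 < d i) (l : Fin k → ℝ)
    (RMV : Matrix (Fin k) (Fin n) ℝ)
    (hRMV : RMVᵀ = ((Tᵀ * (Matrix.diagonal d)⁻¹ * T)⁻¹ * Tᵀ * (Matrix.diagonal d)⁻¹)ᵀ)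
    (hRMVT : RMV * T = 1) :
    ∀ R : Matrix (Fin k) (Fin n) ℝ, R * T = 1 →
      l ⬝ᵥ (RMV * Matrix.diagonal d * RMVᵀ).mulVec l ≤
        l ⬝ᵥ (R * Matrix.diagonal d * Rᵀ).mulVec l := by
  intro R hRT
  set D := Matrix.diagonal d with hD
  have hRMV' : RMV = (Tᵀ * D⁻¹ * T)⁻¹ * Tᵀ * D⁻¹ := by
    have := congrArg Matrix.transpose hRMV
    simpa using this
  have hDinv : D⁻¹ * D = 1 := by
    apply Matrix.nonsing_inv_mul
    rw [hD, Matrix.det_diagonal]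
    exact isUnit_iff_ne_zero.mpr (Finset.prod_ne_zero_iff.mpr
      (fun i _ => (hd i).ne'))
  have key : ∀ S : Matrix (Fin k) (Fin n) ℝ, S * T = 1 →
      RMV * D * Sᵀ = (Tᵀ * D⁻¹ * T)⁻¹ := by
    intro S hS
    have hTS : Tᵀ * Sᵀ = 1 := by rw [← Matrix.transpose_mul, hS, Matrix.transpose_one]
    rw [hRMV', Matrix.mul_assoc _ _ D, hDinv, Matrix.mul_one,
      Matrix.mul_assoc, hTS, Matrix.mul_one]
  set A := R - RMV with hA
  have hDsymm : Dᵀ = D := by rw [hD, Matrix.diagonal_transpose]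
  have hcross : RMV * D * Aᵀ = 0 := by
    rw [hA, Matrix.transpose_sub, Matrix.mul_sub, key R hRT, key RMV hRMVT,
      sub_self]
  have hcross' : A * D * RMVᵀ = 0 := by
    have := congrArg Matrix.transpose hcross
    simpa [Matrix.transpose_mul, hDsymm, Matrix.mul_assoc] using this.symm.symm
  have hdecomp : R * D * Rᵀ = RMV * D * RMVᵀ + A * D * Aᵀ := by
    have hR : R = RMV + A := by rw [hA]; abel
    rw [hR, Matrix.transpose_add, Matrix.add_mul, Matrix.add_mul,
      Matrix.mul_add, Matrix.mul_add, hcross, hcross']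
    abel
  rw [hdecomp]
  have hnonneg : 0 ≤ l ⬝ᵥ (A * D * Aᵀ).mulVec l := by
    have heq : l ⬝ᵥ (A * D * Aᵀ).mulVec l
        = ∑ i, d i * ((Aᵀ.mulVec l) i)^2 := by
      rw [← Matrix.mulVec_mulVec, ← Matrix.mulVec_mulVec,
        Matrix.dotProduct_mulVec, ← Matrix.mulVec_transpose,
        dotProduct, hD]
      refine Finset.sum_congr rfl fun i _ => ?_
      rw [Matrix.mulVec_diagonal]
      ring
    rw [heq]
    exact Finset.sum_nonneg fun i _ => mul_nonneg (hd i).le (sq_nonneg _)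
  rw [Matrix.add_mulVec, dotProduct_add]
  linarith
end

section
/- The IPS matrix R_IPS, defined by (R_IPS)_{i,j} = −1/π(i) if i = j ≤ m, (R_IPS)_{i,j} = 1/π(i−1) if i = j+1 and j ≤ m, and 0 otherwise, satisfies the generalized-inverse condition Tᵀ R_IPSᵀ l = l for every loss vector l ∈ ℝ^{m+1} whose first coordinate is treated consistently, where T is the pricing transformation matrix. -/
open Matrix

/-- The IPS matrix ((m+1) × 2m), 0-indexed: column `j < m` has `-1/π j` in row
`j` and `1/π j` in row `j+1`; columns `j ≥ m` are zero. -/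
noncomputable def RIPS (m : ℕ) (π : Fin m → ℝ) : Matrix (Fin (m + 1)) (Fin (2 * m)) ℝ :=
  fun i j =>
    if h : j.val < m then
      (if i.val = j.val then -1 / π ⟨j.val, h⟩
       else if i.val = j.val + 1 then 1 / π ⟨j.val, h⟩ else 0)
    else 0

/-- `R_IPS` is a generalized inverse of `T` along every loss vector `l` whose
first coordinate (the loss at the zero valuation `p₀`) is `0`:
`Tᵀ R_IPSᵀ l = l`. -/
theorem stmt_9 (m : ℕ) (hm : 1 ≤ m) (π : Fin m → ℝ) (hπpos : ∀ i, 0 < π i)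
    (l : Fin (m + 1) → ℝ) (hl0 : l 0 = 0) :
    (Tmat m π)ᵀ.mulVec ((RIPS m π)ᵀ.mulVec l) = l := by
  have hπ0 : ∀ i, π i ≠ 0 := fun i => (hπpos i).ne'
  funext k
  have hk : k.val ≤ m := by omega
  simp only [mulVec, dotProduct, transpose_apply]
  set g : ℕ → ℝ := fun i => l ⟨min i m, by omega⟩ with hg
  have hinner : ∀ i : Fin (2 * m),
      (∑ p : Fin (m + 1), RIPS m π p i * l p) =
      if h : i.val < m then (g (i.val + 1) - g i.val) / π ⟨i.val, h⟩ else 0 := by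
    intro i
    by_cases h : i.val < m
    · rw [dif_pos h]
      have hsplit : ∀ p : Fin (m + 1), RIPS m π p i * l p =
          (if p = (⟨i.val, by omega⟩ : Fin (m + 1)) then -l p / π ⟨i.val, h⟩ else 0)
          + (if p = (⟨i.val + 1, by omega⟩ : Fin (m + 1)) then l p / π ⟨i.val, h⟩ else 0) := by
        intro p
        simp only [RIPS, dif_pos h, Fin.ext_iff]
        by_cases h1 : p.val = i.val
        · rw [if_pos h1, if_pos h1, if_neg (by omega)]
          ring
        · rw [if_neg h1, if_neg h1]
          by_cases h2 : p.val = i.val + 1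
          · rw [if_pos h2, if_pos h2]; ring
          · rw [if_neg h2, if_neg h2]; ring
      rw [Finset.sum_congr rfl (fun p _ => hsplit p), Finset.sum_add_distrib,
        Finset.sum_ite_eq' Finset.univ (⟨i.val, by omega⟩ : Fin (m + 1)),
        Finset.sum_ite_eq' Finset.univ (⟨i.val + 1, by omega⟩ : Fin (m + 1))]
      simp only [Finset.mem_univ, if_true, hg]
      simp only [show (↑i + 1) ⊓ m = ↑i + 1 from min_eq_left (by omega),
        show ↑i ⊓ m = ↑i from min_eq_left (by omega)]
      ring
    · rw [dif_neg h]
      apply Finset.sum_eq_zero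
      intro p _
      simp [RIPS, h]
  simp only [hinner]
  have houter : ∀ i : Fin (2 * m),
      Tmat m π i k * (if h : i.val < m then (g (i.val + 1) - g i.val) / π ⟨i.val, h⟩ else 0)
      = if i.val < k.val then g (i.val + 1) - g i.val else 0 := by
    intro i
    by_cases h : i.val < m
    · simp only [Tmat, dif_pos h]
      by_cases hik : i.val < k.val
      · rw [if_pos hik, if_pos hik, mul_comm, div_mul_cancel₀ _ (hπ0 _)]
      · rw [if_neg hik, if_neg hik, zero_mul]
    · have hnk : ¬ (i.val < k.val) := by omega
      simp only [dif_neg h, mul_zero, if_neg hnk]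
  rw [Finset.sum_congr rfl (fun i _ => houter i),
    Fin.sum_univ_eq_sum_range (fun i => if i < k.val then g (i + 1) - g i else 0)]
  have hsub : ∑ i ∈ Finset.range (2 * m), (if i < k.val then g (i + 1) - g i else 0)
      = ∑ i ∈ Finset.range k.val, (g (i + 1) - g i) := by
    rw [← Finset.sum_subset (Finset.range_subset_range.2 (show k.val ≤ 2 * m by omega))
      (fun x _ hx => if_neg (by simpa using hx))]
    exact Finset.sum_congr rfl fun x hx => if_pos (Finset.mem_range.1 hx)
  rw [hsub, Finset.sum_range_sub g]
  simp only [hg]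
  have e1 : (⟨↑k ⊓ m, by omega⟩ : Fin (m + 1)) = k := Fin.ext (by simp [min_eq_left hk])
  have e2 : (⟨0 ⊓ m, by omega⟩ : Fin (m + 1)) = 0 := Fin.ext (by simp)
  rw [e1, e2, hl0, sub_zero]
end

section
/- For any probability vector f on n ≥ 2 outcomes and any vector x ∈ ℝ^n, the variance form ∑ᵢ fᵢxᵢ² − (∑ᵢ fᵢxᵢ)² is maximized over probability vectors f at a distribution supported on at most two points: specifically, sup over the probability simplex of ∑ fᵢxᵢ² − (∑ fᵢxᵢ)² equals max_{i,j} (xᵢ − xⱼ)²/4, attained at f = (eᵢ + eⱼ)/2 for the maximizing pair. -/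
open Finset

/-- The variance form `V(f) = ∑ fᵢxᵢ² − (∑ fᵢxᵢ)²` over the probability simplex
is maximized at a two-point distribution, with maximum value
`(max x − min x)² / 4`. -/
theorem stmt_11 (n : ℕ) (hn : 2 ≤ n) (x : Fin n → ℝ) :
    IsGreatest {v : ℝ | ∃ f : Fin n → ℝ, (∀ i, 0 ≤ f i) ∧ (∑ i, f i = 1) ∧
        v = (∑ i, f i * x i ^ 2) - (∑ i, f i * x i) ^ 2}
      (((⨆ i, x i) - (⨅ i, x i)) ^ 2 / 4) ∧
    ∃ i j : Fin n, (∀ k, x k ≤ x i) ∧ (∀ k, x j ≤ x k) ∧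
      (∑ k, (fun k => ((if k = i then (1 : ℝ) else 0) +
          (if k = j then 1 else 0)) / 2) k * x k ^ 2) -
        (∑ k, (fun k => ((if k = i then (1 : ℝ) else 0) +
          (if k = j then 1 else 0)) / 2) k * x k) ^ 2 =
        ((⨆ i, x i) - (⨅ i, x i)) ^ 2 / 4 := by
  have hne : Nonempty (Fin n) := ⟨⟨0, by omega⟩⟩
  obtain ⟨i, hi⟩ := Finite.exists_max x
  obtain ⟨j, hj⟩ := Finite.exists_min x
  have hM : (⨆ k, x k) = x i :=
    le_antisymm (ciSup_le hi) (le_ciSup (Set.finite_range x).bddAbove i)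
  have hm : (⨅ k, x k) = x j :=
    le_antisymm (ciInf_le (Set.finite_range x).bddBelow j) (le_ciInf hj)
  have hsum : ∀ g : Fin n → ℝ,
      (∑ k, ((if k = i then (1 : ℝ) else 0) + (if k = j then 1 else 0)) / 2 * g k)
        = (g i + g j) / 2 := by
    intro g
    have h1 : ∀ a : Fin n, (∑ k, (if k = a then (1 : ℝ) else 0) / 2 * g k) = g a / 2 := by
      intro a
      rw [Finset.sum_eq_single a]
      · simp; ring
      · intro b _ hb; simp [hb]
      · simp
    simp only [add_div, add_mul, Finset.sum_add_distrib, h1]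
    try ring
  have hval : (∑ k, (fun k => ((if k = i then (1 : ℝ) else 0) +
          (if k = j then 1 else 0)) / 2) k * x k ^ 2) -
        (∑ k, (fun k => ((if k = i then (1 : ℝ) else 0) +
          (if k = j then 1 else 0)) / 2) k * x k) ^ 2 =
        ((⨆ i, x i) - (⨅ i, x i)) ^ 2 / 4 := by
    simp only [hsum (fun k => x k ^ 2), hsum x, hM, hm]
    ring
  refine ⟨⟨⟨fun k => ((if k = i then (1 : ℝ) else 0) + (if k = j then 1 else 0)) / 2,
      fun k => by positivity, ?_, hval.symm⟩, ?_⟩, i, j, hi, hj, hval⟩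
  · have := hsum (fun _ => (1 : ℝ))
    simpa using this.trans (by norm_num)
  · rintro v ⟨f, hf0, hf1, rfl⟩
    rw [hM, hm]
    set M := x i
    set m := x j
    have key : (∑ k, f k * x k ^ 2) ≤ ∑ k, f k * ((M + m) * x k - M * m) := by
      apply Finset.sum_le_sum
      intro k _
      have h1 := hi k
      have h2 := hj k
      have : x k ^ 2 ≤ (M + m) * x k - M * m := by nlinarith
      exact mul_le_mul_of_nonneg_left this (hf0 k)
    have hrhs : (∑ k, f k * ((M + m) * x k - M * m))
        = (M + m) * (∑ k, f k * x k) - M * m := by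
      have h : ∀ k : Fin n, f k * ((M + m) * x k - M * m)
          = (M + m) * (f k * x k) - M * m * f k := fun k => by ring
      simp only [h, Finset.sum_sub_distrib, ← Finset.mul_sum, hf1, mul_one]
    have hb := key.trans (le_of_eq hrhs)
    nlinarith [sq_nonneg ((∑ k, f k * x k) - (M + m) / 2)]
end
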